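/- For θ ∈ (0, π/X), the maximal eigenvalue of Σ_{x=0}^{X−1} Π_x^θ, where Π_x^θ projects onto e_x^θ = cos(μ_x/2)v₀ + sin(μ_x/2)v₁ with μ_x = (x−(X−1)/2)θ, equals (1/2)(X + sin(Xθ/2)/sin(θ/2)). -/

import Mathlib

open Matrix Real

lemma aux_cos_sum (X : ℕ) (θ : ℝ) (hs : Real.sin (θ/2) ≠ 0) :
    ∑ x ∈ Finset.range X, Real.cos (((x:ℝ) - ((X:ℝ)-1)/2) * θ)
      = Real.sin (X*θ/2) / Real.sin (θ/2) := by
  have key := Finset.sum_range_sub (f := fun x : ℕ => Real.sin (((x:ℝ) - (X:ℝ)/2) * θ)) X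
  have step : ∀ x ∈ Finset.range X,
      (fun x : ℕ => Real.sin ((((x+1:ℕ):ℝ) - (X:ℝ)/2) * θ)) x
        - (fun x : ℕ => Real.sin (((x:ℝ) - (X:ℝ)/2) * θ)) x
        = 2 * Real.sin (θ/2) * Real.cos (((x:ℝ) - ((X:ℝ)-1)/2) * θ) := by
    intro x _
    simp only
    push_cast
    rw [Real.sin_sub_sin]
    ring_nf
  rw [Finset.sum_congr rfl step] at key
  have e1 : ((X:ℝ) - (X:ℝ)/2) * θ = X*θ/2 := by ring
  have e2 : (((0:ℕ):ℝ) - (X:ℝ)/2) * θ = -(X*θ/2) := by push_cast; ring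
  rw [e1, e2, Real.sin_neg, sub_neg_eq_add, ← Finset.mul_sum] at key
  rw [eq_div_iff hs]
  linear_combination key / 2

lemma aux_sin_sum (X : ℕ) (θ : ℝ) (hs : Real.sin (θ/2) ≠ 0) :
    ∑ x ∈ Finset.range X, Real.sin (((x:ℝ) - ((X:ℝ)-1)/2) * θ) = 0 := by
  have key := Finset.sum_range_sub (f := fun x : ℕ => -Real.cos (((x:ℝ) - (X:ℝ)/2) * θ)) X
  have step : ∀ x ∈ Finset.range X,
      (fun x : ℕ => -Real.cos ((((x+1:ℕ):ℝ) - (X:ℝ)/2) * θ)) x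
        - (fun x : ℕ => -Real.cos (((x:ℝ) - (X:ℝ)/2) * θ)) x
        = 2 * Real.sin (θ/2) * Real.sin (((x:ℝ) - ((X:ℝ)-1)/2) * θ) := by
    intro x _
    simp only
    push_cast
    rw [neg_sub_neg, Real.cos_sub_cos]
    ring_nf
    rw [show θ*(-1/2) = -(θ*(1/2)) by ring, Real.sin_neg]
    ring
  rw [Finset.sum_congr rfl step] at key
  have e1 : ((X:ℝ) - (X:ℝ)/2) * θ = X*θ/2 := by ring
  have e2 : (((0:ℕ):ℝ) - (X:ℝ)/2) * θ = -(X*θ/2) := by push_cast; ring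
  rw [e1, e2, Real.cos_neg, ← Finset.mul_sum] at key
  have h2 : (2 : ℝ) * Real.sin (θ/2) ≠ 0 := by positivity
  have := mul_eq_zero.mp (by linarith [key] : 2 * Real.sin (θ/2) * ∑ x ∈ Finset.range X, Real.sin (((x:ℝ) - ((X:ℝ)-1)/2) * θ) = 0)
  tauto

lemma dot_self_cast {d : ℕ} (v : Fin d → ℂ) :
    star v ⬝ᵥ v = ((∑ i, Complex.normSq (v i) : ℝ) : ℂ) := by
  push_cast
  simp [dotProduct, Complex.normSq_eq_conj_mul_self, Complex.star_def]

lemma vecMulVec_mv {d : ℕ} (u w v : Fin d → ℂ) :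
    (vecMulVec u w).mulVec v = (w ⬝ᵥ v) • u := by
  ext i
  simp only [Matrix.mulVec, dotProduct, Matrix.vecMulVec_apply, Pi.smul_apply, smul_eq_mul,
    Finset.sum_mul, Finset.mul_sum]
  exact Finset.sum_congr rfl fun j _ => by ring

lemma dot_sum {d : ℕ} (s : Finset ℕ) (u : Fin d → ℂ) (f : ℕ → Fin d → ℂ) :
    u ⬝ᵥ (∑ x ∈ s, f x) = ∑ x ∈ s, u ⬝ᵥ (f x) := by
  simp only [dotProduct, Finset.sum_apply, Finset.mul_sum]
  exact Finset.sum_comm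


/-- The maximal eigenvalue of the sum of equally spaced rank-one projections is
`(X + sin(Xθ/2)/sin(θ/2))/2`. -/
theorem stmt9 {d : ℕ} (hd : 2 ≤ d) (X : ℕ) (hX : 2 ≤ X)
    (θ : ℝ) (hθ : 0 < θ) (hθ' : θ < π / X)
    (v₀ v₁ : Fin d → ℂ) (h₀ : star v₀ ⬝ᵥ v₀ = 1) (h₁ : star v₁ ⬝ᵥ v₁ = 1)
    (h₀₁ : star v₀ ⬝ᵥ v₁ = 0)
    (μ : ℕ → ℝ) (hμ : ∀ x, μ x = ((x : ℝ) - ((X : ℝ) - 1) / 2) * θ)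
    (e : ℕ → Fin d → ℂ)
    (he : ∀ x, e x = (Real.cos (μ x / 2) : ℂ) • v₀ + (Real.sin (μ x / 2) : ℂ) • v₁)
    (S : Matrix (Fin d) (Fin d) ℂ)
    (hS : S = ∑ x ∈ Finset.range X, vecMulVec (e x) (star (e x))) :
    (∃ v : Fin d → ℂ, v ≠ 0 ∧
      S.mulVec v = ((((X : ℝ) + Real.sin (X * θ / 2) / Real.sin (θ / 2)) / 2 : ℝ) : ℂ) • v) ∧
    (∀ μ' : ℝ, (∃ v : Fin d → ℂ, v ≠ 0 ∧ S.mulVec v = (μ' : ℂ) • v) →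
      μ' ≤ ((X : ℝ) + Real.sin (X * θ / 2) / Real.sin (θ / 2)) / 2) := by
  
  -- basic positivity facts
  have hXR : (2:ℝ) ≤ (X:ℝ) := by exact_mod_cast hX
  have hXpos : (0:ℝ) < X := by linarith
  have hXθ : (X:ℝ) * θ < π := by
    rw [mul_comm]
    exact (lt_div_iff₀ hXpos).mp hθ'
  have hθπ : θ < π := by nlinarith [Real.pi_pos]
  have hs2 : 0 < Real.sin (θ/2) := Real.sin_pos_of_pos_of_lt_pi (by linarith) (by linarith [Real.pi_pos])
  have hsX : 0 < Real.sin ((X:ℝ)*θ/2) :=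
    Real.sin_pos_of_pos_of_lt_pi (by positivity) (by linarith [Real.pi_pos])
  set c : ℝ := Real.sin ((X:ℝ) * θ / 2) / Real.sin (θ / 2) with hcdef
  have hc : 0 < c := div_pos hsX hs2
  -- trig sums
  have hsum1 : ∑ x ∈ Finset.range X, Real.cos (μ x / 2)^2 = ((X:ℝ) + c)/2 := by
    have h := aux_cos_sum X θ hs2.ne'
    calc ∑ x ∈ Finset.range X, Real.cos (μ x / 2)^2
        = ∑ x ∈ Finset.range X, (1/2 + Real.cos (μ x)/2) := by
          refine Finset.sum_congr rfl fun x _ => ?_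
          rw [Real.cos_sq]
          congr 2
          ring
      _ = ((X:ℝ) + c)/2 := by
          rw [Finset.sum_add_distrib, Finset.sum_const, Finset.card_range, ← Finset.sum_div]
          simp only [hμ] at *
          rw [h]
          push_cast
          ring
  have hsum2 : ∑ x ∈ Finset.range X, Real.sin (μ x / 2)^2 = ((X:ℝ) - c)/2 := by
    have h := aux_cos_sum X θ hs2.ne'
    calc ∑ x ∈ Finset.range X, Real.sin (μ x / 2)^2
        = ∑ x ∈ Finset.range X, (1/2 - Real.cos (μ x)/2) := by
          refine Finset.sum_congr rfl fun x _ => ?_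
          rw [Real.sin_sq, Real.cos_sq]
          ring_nf
      _ = ((X:ℝ) - c)/2 := by
          rw [Finset.sum_sub_distrib, Finset.sum_const, Finset.card_range, ← Finset.sum_div]
          simp only [hμ] at *
          rw [h]
          push_cast
          ring
  have hsum3 : ∑ x ∈ Finset.range X, Real.cos (μ x / 2) * Real.sin (μ x / 2) = 0 := by
    have h := aux_sin_sum X θ hs2.ne'
    calc ∑ x ∈ Finset.range X, Real.cos (μ x / 2) * Real.sin (μ x / 2)
        = ∑ x ∈ Finset.range X, Real.sin (μ x)/2 := by
          refine Finset.sum_congr rfl fun x _ => ?_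
          rw [show μ x = 2 * (μ x / 2) by ring, Real.sin_two_mul]
          ring_nf
      _ = 0 := by
          rw [← Finset.sum_div]
          simp only [hμ] at *
          rw [h]
          norm_num
  -- orthonormality extras
  have h₁₀ : star v₁ ⬝ᵥ v₀ = 0 := by rw [star_dotProduct, h₀₁, star_zero]
  -- S action
  have hmulvec : ∀ w : Fin d → ℂ,
      S.mulVec w = ∑ x ∈ Finset.range X, (star (e x) ⬝ᵥ w) • e x := by
    intro w
    subst hS
    ext i
    simp only [Matrix.mulVec, dotProduct, Matrix.sum_apply, Matrix.vecMulVec_apply,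
      Finset.sum_apply, Pi.smul_apply, smul_eq_mul, Finset.sum_mul, Finset.mul_sum,
      Pi.star_apply]
    rw [Finset.sum_comm]
    exact Finset.sum_congr rfl fun x _ => Finset.sum_congr rfl fun j _ => by ring
  have hedot : ∀ (x : ℕ) (w : Fin d → ℂ),
      star (e x) ⬝ᵥ w = (Real.cos (μ x / 2) : ℂ) * (star v₀ ⬝ᵥ w)
        + (Real.sin (μ x / 2) : ℂ) * (star v₁ ⬝ᵥ w) := by
    intro x w
    rw [he]
    simp only [star_add, star_smul, add_dotProduct, smul_dotProduct, smul_eq_mul,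
      Complex.star_def, Complex.conj_ofReal]
  constructor
  · -- existence: v₀ is an eigenvector
    refine ⟨v₀, fun h => by simp [h] at h₀, ?_⟩
    rw [hmulvec v₀]
    have key : ∀ x ∈ Finset.range X, (star (e x) ⬝ᵥ v₀) • e x
        = ((Real.cos (μ x/2)^2 : ℝ) : ℂ) • v₀
          + ((Real.cos (μ x/2) * Real.sin (μ x/2) : ℝ) : ℂ) • v₁ := by
      intro x _
      rw [hedot, h₀, h₁₀, he]
      push_cast
      module
    rw [Finset.sum_congr rfl key, Finset.sum_add_distrib, ← Finset.sum_smul, ← Finset.sum_smul,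
      ← Complex.ofReal_sum, ← Complex.ofReal_sum, hsum1, hsum3]
    simp
  · rintro μ' ⟨v, hv, hev⟩
    set a : ℂ := star v₀ ⬝ᵥ v with ha
    set b : ℂ := star v₁ ⬝ᵥ v with hb
    set N : ℝ := ∑ i, Complex.normSq (v i) with hN
    have hNpos : 0 < N := by
      obtain ⟨i, hi⟩ := Function.ne_iff.mp hv
      exact Finset.sum_pos' (fun j _ => Complex.normSq_nonneg _)
        ⟨i, Finset.mem_univ i, Complex.normSq_pos.mpr hi⟩
    set A : ℝ := Complex.normSq a with hA
    set B : ℝ := Complex.normSq b with hB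
    -- quadratic form value
    have hform : ((μ' * N : ℝ) : ℂ) = ((((X:ℝ)+c)/2 * A + ((X:ℝ)-c)/2 * B : ℝ) : ℂ) := by
      have lhs : star v ⬝ᵥ S.mulVec v = ((μ' * N : ℝ) : ℂ) := by
        rw [hev, dotProduct_smul, dot_self_cast, ← hN, smul_eq_mul]
        push_cast
        ring
      have rhs : star v ⬝ᵥ S.mulVec v
          = ((((X:ℝ)+c)/2 * A + ((X:ℝ)-c)/2 * B : ℝ) : ℂ) := by
        rw [hmulvec v, dot_sum]
        have term : ∀ x ∈ Finset.range X,
            star v ⬝ᵥ ((star (e x) ⬝ᵥ v) • e x)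
              = ((Real.cos (μ x/2)^2 : ℝ):ℂ) * (a * star a)
                + ((Real.sin (μ x/2)^2 : ℝ):ℂ) * (b * star b)
                + ((Real.cos (μ x/2) * Real.sin (μ x/2) : ℝ):ℂ) * (a * star b + b * star a) := by
          intro x _
          have hse : star v ⬝ᵥ e x = star (star (e x) ⬝ᵥ v) := by rw [star_dotProduct]
          rw [dotProduct_smul, smul_eq_mul, hse, hedot]
          simp only [Complex.star_def, _root_.map_add, _root_.map_mul, Complex.conj_ofReal,
            ← ha, ← hb, Complex.ofReal_pow, Complex.ofReal_mul]
          ring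
        rw [Finset.sum_congr rfl term, Finset.sum_add_distrib, Finset.sum_add_distrib,
          ← Finset.sum_mul, ← Finset.sum_mul, ← Finset.sum_mul,
          ← Complex.ofReal_sum, ← Complex.ofReal_sum, ← Complex.ofReal_sum,
          hsum1, hsum2, hsum3]
        have ea : a * star a = ((A:ℝ):ℂ) := by
          rw [hA, Complex.star_def, Complex.mul_conj]
        have eb : b * star b = ((B:ℝ):ℂ) := by
          rw [hB, Complex.star_def, Complex.mul_conj]
        rw [ea, eb]
        push_cast
        ring
      rw [← lhs, rhs]
    have hform' : μ' * N = ((X:ℝ)+c)/2 * A + ((X:ℝ)-c)/2 * B := by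
      exact_mod_cast hform
    -- Bessel inequality
    have hbessel : A + B ≤ N := by
      set w : Fin d → ℂ := v - a • v₀ - b • v₁ with hw
      have hexp : star w ⬝ᵥ w = ((N - A - B : ℝ) : ℂ) := by
        have hv0 : star v ⬝ᵥ v₀ = star a := by rw [star_dotProduct]
        have hv1 : star v ⬝ᵥ v₁ = star b := by rw [star_dotProduct]
        rw [hw]
        simp only [star_sub, star_smul, sub_dotProduct, dotProduct_sub, smul_dotProduct,
          dotProduct_smul, smul_eq_mul, h₀, h₁, h₀₁, h₁₀, hv0, hv1, ← ha, ← hb,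
          dot_self_cast, ← hN]
        have ea : star a * a = ((A:ℝ):ℂ) := by
          rw [hA, Complex.star_def]
          exact Complex.normSq_eq_conj_mul_self.symm
        have eb : star b * b = ((B:ℝ):ℂ) := by
          rw [hB, Complex.star_def]
          exact Complex.normSq_eq_conj_mul_self.symm
        push_cast
        rw [← ea, ← eb]
        ring
      have hnn : (0:ℝ) ≤ N - A - B := by
        have := dot_self_cast w
        rw [hexp] at this
        have h2 : (N - A - B : ℝ) = ∑ i, Complex.normSq (w i) := by exact_mod_cast this
        rw [h2]
        exact Finset.sum_nonneg fun i _ => Complex.normSq_nonneg _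
      linarith
    have hAnn : 0 ≤ A := Complex.normSq_nonneg _
    have hBnn : 0 ≤ B := Complex.normSq_nonneg _
    -- conclude
    have hfin : μ' * N ≤ ((X:ℝ)+c)/2 * N := by
      nlinarith [mul_nonneg hc.le hBnn]
    have := (mul_le_mul_iff_of_pos_right hNpos).mp hfin
    linarith
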